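/- Let 𝒟 be a small category with Grothendieck topology K, 𝒞 a category, p : 𝒟 ⥤ 𝒞 a functor, and f : d' ⟶ d a morphism of 𝒟. Let P be the presheaf on 𝒟 given by the pullback, in presheaves of types on 𝒟, of the morphism Hom_𝒟(−, d) ⟶ Hom_𝒞(p(−), p(d)), g ↦ p(g), along the morphism Hom_𝒞(p(−), p(d')) ⟶ Hom_𝒞(p(−), p(d)), h ↦ p(f) ∘ h (so P(e) = {(g : e ⟶ d, h : p(e) ⟶ p(d')) | p(f) ∘ h = p(g)}), and let θ : Hom_𝒟(−, d') ⟶ P be the morphism of presheaves sending u to (f ∘ u, p(u)). Then the K-sheafification of θ is an isomorphism if and only if f is K-locally cartesian. -/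

import Mathlib

open CategoryTheory Limits

universe u

/-- A morphism `f : d' ⟶ d` is `K`-locally cartesian for `p : 𝒟 ⥤ 𝒞`: liftings exist and
are unique locally with respect to the topology `K`. -/
def LocallyCartesian {D : Type*} [Category D] {C : Type*} [Category C]
    (K : GrothendieckTopology D) (p : D ⥤ C) {d' d : D} (f : d' ⟶ d) : Prop :=
  (∀ (d'' : D) (g : d'' ⟶ d) (h : p.obj d'' ⟶ p.obj d'),
      h ≫ p.map f = p.map g →
      ∃ S : Sieve d'', S ∈ K d'' ∧
        ∀ {e : D} (v : e ⟶ d''), S.arrows v →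
          ∃ hv : e ⟶ d', p.map v ≫ h = p.map hv ∧ hv ≫ f = v ≫ g) ∧
  (∀ (d'' : D) (h h' : d'' ⟶ d'), h ≫ f = h' ≫ f → p.map h = p.map h' →
      ∃ S : Sieve d'', S ∈ K d'' ∧ ∀ {e : D} (v : e ⟶ d''), S.arrows v → v ≫ h = v ≫ h')

variable {D C : Type u} [SmallCategory D] [SmallCategory C]

/-- The pullback presheaf `P` on `𝒟` with
`P(e) = {(g : e ⟶ d, h : p(e) ⟶ p(d')) | p(f) ∘ h = p(g)}`. -/
def pbPresheaf (p : D ⥤ C) {d' d : D} (f : d' ⟶ d) : Dᵒᵖ ⥤ Type u where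
  obj e := { gh : (e.unop ⟶ d) × (p.obj e.unop ⟶ p.obj d') // gh.2 ≫ p.map f = p.map gh.1 }
  map w := TypeCat.ofHom fun x => ⟨(w.unop ≫ x.1.1, p.map w.unop ≫ x.1.2), by
    rw [Category.assoc, x.2, ← p.map_comp]⟩
  map_id := by intro e; ext x <;> simp
  map_comp := by intro e e' e'' w w'; ext x <;> simp

/-- The comparison morphism `θ : Hom(−, d') ⟶ P`, `u ↦ (f ∘ u, p(u))`. -/
def thetaCompare (p : D ⥤ C) {d' d : D} (f : d' ⟶ d) :
    yoneda.obj d' ⟶ pbPresheaf p f where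
  app e := TypeCat.ofHom fun u => ⟨(u ≫ f, p.map u), (p.map_comp u f).symm⟩
  naturality := by intro e e' w; ext u <;> simp [pbPresheaf]

/-- The `K`-sheafification of `θ` is an isomorphism iff `f` is `K`-locally cartesian. -/
theorem sheafify_theta_isIso_iff_locallyCartesian
    (K : GrothendieckTopology D) (p : D ⥤ C) {d' d : D} (f : d' ⟶ d) :
    IsIso ((presheafToSheaf K (Type u)).map (thetaCompare p f)) ↔
      LocallyCartesian K p f := by
  rw [← K.W_iff, K.W_iff_isLocallyBijective]
  constructor
  · rintro ⟨hinj, hsurj⟩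
    constructor
    · intro d'' g h hgh
      refine ⟨Presheaf.imageSieve (thetaCompare p f) (⟨(g, h), hgh⟩ : {gh : (d'' ⟶ d) × (p.obj d'' ⟶ p.obj d') // gh.2 ≫ p.map f = p.map gh.1}), hsurj.imageSieve_mem _, ?_⟩
      rintro e v ⟨t, ht⟩
      have := congrArg Subtype.val ht
      rw [Prod.ext_iff] at this
      dsimp [thetaCompare, pbPresheaf] at this
      exact ⟨t, this.2.symm, this.1⟩
    · intro d'' h h' hf hp
      refine ⟨Presheaf.equalizerSieve (F := yoneda.obj d') h h', ?_, ?_⟩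
      · apply hinj.equalizerSieve_mem
        refine Subtype.ext (p := fun gh : (d'' ⟶ d) × (p.obj d'' ⟶ p.obj d') => gh.2 ≫ p.map f = p.map gh.1) ?_
        rw [Prod.ext_iff]
        exact ⟨hf, hp⟩
      · intro e v hv
        exact hv
  · rintro ⟨hex, huniq⟩
    constructor
    · constructor
      intro X x y hxy
      have hxy' := congrArg (Subtype.val (p := fun gh : (X.unop ⟶ d) × (p.obj X.unop ⟶ p.obj d') => gh.2 ≫ p.map f = p.map gh.1)) hxy
      rw [Prod.ext_iff] at hxy'
      dsimp [thetaCompare] at hxy'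
      obtain ⟨S, hS, hSv⟩ := huniq X.unop x y hxy'.1 hxy'.2
      exact K.superset_covering (fun e v hv => hSv v hv) hS
    · constructor
      intro U s
      change {gh : (U ⟶ d) × (p.obj U ⟶ p.obj d') // gh.2 ≫ p.map f = p.map gh.1} at s
      obtain ⟨S, hS, hSv⟩ := hex U s.1.1 s.1.2 s.2
      refine K.superset_covering ?_ hS
      intro e v hv
      obtain ⟨hv', h1, h2⟩ := hSv v hv
      refine ⟨hv', ?_⟩
      refine Subtype.ext (p := fun gh : (e ⟶ d) × (p.obj e ⟶ p.obj d') => gh.2 ≫ p.map f = p.map gh.1) ?_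
      rw [Prod.ext_iff]
      exact ⟨h2, h1.symm⟩
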